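/- arXiv:2007.00377 — 2 statements merged into one kernel-verified Lean document; each statement's English description precedes it below -/
import Mathlib

section
/- If (R, m) is a Noetherian local ring and I, J are m-primary ideals with J an almost reduction of I, then the multiplicities e_0(J) and e_0(I) are equal. -/
/-- `J` is an *almost reduction* of `I`. -/
def IsAlmostReduction {R : Type*} [CommRing R] (J I : Ideal R) : Prop :=
  ∃ ℓ : ℕ, J ^ ℓ ≤ I ^ ℓ ∧ I ^ (ℓ + 1) = J * I ^ ℓ

/-- The length of a module, as a natural number (the Krull dimension of the lattice of
submodules; `0` if infinite). -/
noncomputable def lengthNat (R M : Type*) [CommRing R] [AddCommGroup M] [Module R M] : ℕ :=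
  ENat.toNat (WithBot.unbotD 0 (Order.krullDim (Submodule R M)))

/-- The Krull dimension of the ring `R`, as a natural number. -/
noncomputable def dimNat (R : Type*) [CommRing R] : ℕ :=
  ENat.toNat (WithBot.unbotD 0 (ringKrullDim R))

/-- For ideals `N' ≤ N`, the lattice of submodules of `R ⧸ N` embeds into that of `R ⧸ N'`. -/
lemma krullDim_quot_mono {R : Type*} [CommRing R] {N' N : Ideal R} (h : N' ≤ N) :
    Order.krullDim (Submodule R (R ⧸ N)) ≤ Order.krullDim (Submodule R (R ⧸ N')) := by
  have h' : N' ≤ Submodule.comap (LinearMap.id (R := R)) N := h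
  have hsurj : Function.Surjective (Submodule.mapQ N' N LinearMap.id h') := by
    intro x
    obtain ⟨y, rfl⟩ := Submodule.Quotient.mk_surjective N x
    exact ⟨Submodule.Quotient.mk y, rfl⟩
  exact Order.krullDim_le_of_strictMono _ (Submodule.comap_strictMono_of_surjective hsurj)

lemma unbot'_toNat_mono {a b : WithBot ℕ∞} (hab : a ≤ b) (hb : b ≠ ⊤) :
    ENat.toNat (WithBot.unbotD 0 a) ≤ ENat.toNat (WithBot.unbotD 0 b) := by
  cases a with
  | bot => simp
  | coe a' =>
    cases b with
    | bot => simp at hab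
    | coe b' =>
      rw [WithBot.unbotD_coe, WithBot.unbotD_coe]
      refine ENat.toNat_le_toNat (by exact_mod_cast hab) fun hb' => hb ?_
      rw [hb']
      rfl

lemma lengthNat_quot_le {R : Type*} [CommRing R] {N' N : Ideal R} (h : N' ≤ N)
    (hfin : Order.krullDim (Submodule R (R ⧸ N')) ≠ ⊤) :
    lengthNat R (R ⧸ N) ≤ lengthNat R (R ⧸ N') :=
  unbot'_toNat_mono (krullDim_quot_mono h) hfin

lemma pow_eq_of_step {R : Type*} [CommRing R] {I J : Ideal R} {ℓ : ℕ}
    (hmul : I ^ (ℓ + 1) = J * I ^ ℓ) : ∀ n, I ^ (ℓ + n) = J ^ n * I ^ ℓ := by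
  intro n
  induction n with
  | zero => simp
  | succ n ih =>
    calc I ^ (ℓ + (n + 1)) = I ^ (ℓ + n) * I := by rw [← pow_succ, Nat.add_succ]
      _ = J ^ n * I ^ ℓ * I := by rw [ih]
      _ = J ^ n * I ^ (ℓ + 1) := by rw [pow_succ]; ring
      _ = J ^ n * (J * I ^ ℓ) := by rw [hmul]
      _ = J ^ (n + 1) * I ^ ℓ := by rw [pow_succ]; ring

open Filter in
/-- If `(R, 𝔪)` is a Noetherian local ring and `I`, `J` are `𝔪`-primary ideals with `J`
an almost reduction of `I`, then the Hilbert–Samuel multiplicities `e₀(J)` and `e₀(I)` agree: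
here `e₀(I) = d! · lim_n ℓ_R(R/Iⁿ)/n^d`, so we express the equality of multiplicities by
saying that the normalized length functions of `I` and `J` have the same limits. -/
theorem multiplicity_eq_of_isAlmostReduction {R : Type*} [CommRing R] [IsNoetherianRing R]
    [IsLocalRing R] (I J : Ideal R)
    (hI : I.radical = IsLocalRing.maximalIdeal R)
    (hJ : J.radical = IsLocalRing.maximalIdeal R)
    (h : IsAlmostReduction J I) :
    ∀ L : ℝ,
      Tendsto (fun n : ℕ => (lengthNat R (R ⧸ I ^ n) : ℝ) / (n : ℝ) ^ (dimNat R)) atTop (nhds L)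
      ↔ Tendsto (fun n : ℕ => (lengthNat R (R ⧸ J ^ n) : ℝ) / (n : ℝ) ^ (dimNat R))
          atTop (nhds L) := by
  obtain ⟨ℓ, hJl, hmul⟩ := h
  have hpow : ∀ n, I ^ (ℓ + n) = J ^ n * I ^ ℓ := pow_eq_of_step hmul
  -- `I^(n+ℓ) ≤ J^n`
  have hIJ : ∀ n, I ^ (n + ℓ) ≤ J ^ n := by
    intro n
    rw [add_comm, hpow n]
    exact Ideal.mul_le_left
  -- `J^(n+ℓ) ≤ I^(n+ℓ)`
  have hJI : ∀ n, J ^ (n + ℓ) ≤ I ^ (n + ℓ) := by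
    intro n
    rw [add_comm n ℓ, hpow n, pow_add, mul_comm (J ^ ℓ) (J ^ n)]
    exact Ideal.mul_mono_right hJl
  set d := dimNat R with hd
  by_cases hbad : ∃ n, Order.krullDim (Submodule R (R ⧸ I ^ n)) = ⊤
  · -- degenerate case: lengths are eventually infinite, so `lengthNat` is eventually `0`
    obtain ⟨n₀, hn₀⟩ := hbad
    intro L
    have heq : (fun n : ℕ => (lengthNat R (R ⧸ I ^ n) : ℝ) / (n : ℝ) ^ d) =ᶠ[atTop]
        (fun n : ℕ => (lengthNat R (R ⧸ J ^ n) : ℝ) / (n : ℝ) ^ d) := by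
      filter_upwards [eventually_ge_atTop (n₀ + ℓ)] with n hn
      have hIn : I ^ n ≤ I ^ n₀ := Ideal.pow_le_pow_right (by omega)
      have hJn : J ^ n ≤ I ^ n₀ := by
        have h1 : J ^ ((n - ℓ) + ℓ) ≤ I ^ ((n - ℓ) + ℓ) := hJI (n - ℓ)
        rw [show (n - ℓ) + ℓ = n by omega] at h1
        exact h1.trans hIn
      have hItop : Order.krullDim (Submodule R (R ⧸ I ^ n)) = ⊤ :=
        top_le_iff.mp (hn₀ ▸ krullDim_quot_mono hIn)
      have hJtop : Order.krullDim (Submodule R (R ⧸ J ^ n)) = ⊤ :=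
        top_le_iff.mp (hn₀ ▸ krullDim_quot_mono hJn)
      have e1 : lengthNat R (R ⧸ I ^ n) = 0 := by
        simp only [lengthNat, hItop]
        rfl
      have e2 : lengthNat R (R ⧸ J ^ n) = 0 := by
        simp only [lengthNat, hJtop]
        rfl
      rw [e1, e2]
    exact ⟨fun hh => hh.congr' heq, fun hh => hh.congr' heq.symm⟩
  · push_neg at hbad
    have hbadJ : ∀ n, Order.krullDim (Submodule R (R ⧸ J ^ n)) ≠ ⊤ := by
      intro n ht
      exact hbad (n + ℓ) (top_le_iff.mp (ht ▸ krullDim_quot_mono (hIJ n)))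
    -- length inequalities
    have hlen1 : ∀ n, lengthNat R (R ⧸ J ^ n) ≤ lengthNat R (R ⧸ I ^ (n + ℓ)) :=
      fun n => lengthNat_quot_le (hIJ n) (hbad _)
    have hlen2 : ∀ n, lengthNat R (R ⧸ I ^ (n + ℓ)) ≤ lengthNat R (R ⧸ J ^ (n + ℓ)) :=
      fun n => lengthNat_quot_le (hJI n) (hbadJ _)
    have hlen3 : ∀ n, ℓ ≤ n → lengthNat R (R ⧸ I ^ n) ≤ lengthNat R (R ⧸ J ^ n) := by
      intro n hn
      have := hlen2 (n - ℓ)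
      rwa [show (n - ℓ) + ℓ = n by omega] at this
    -- the ratio sequences
    have hbase : Tendsto (fun n : ℕ => ((n : ℝ) + ℓ) / (n : ℝ)) atTop (nhds 1) := by
      have h0 : Tendsto (fun n : ℕ => 1 + (ℓ : ℝ) / (n : ℝ)) atTop (nhds 1) := by
        have := (tendsto_const_div_atTop_nhds_zero_nat (ℓ : ℝ)).const_add 1
        simpa using this
      apply h0.congr'
      filter_upwards [eventually_ge_atTop 1] with n hn
      have : (n : ℝ) ≠ 0 := by positivity
      field_simp
    have hr1 : Tendsto (fun n : ℕ => (((n : ℝ) + ℓ) / (n : ℝ)) ^ d) atTop (nhds 1) := by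
      simpa using hbase.pow d
    have hr2 : Tendsto (fun n : ℕ => ((n : ℝ) / ((n : ℝ) + ℓ)) ^ d) atTop (nhds 1) := by
      have := (hbase.inv₀ one_ne_zero).pow d
      simpa [inv_div] using this
    intro L
    constructor
    · -- from I to J
      intro hfI
      have hup : Tendsto (fun n : ℕ => (lengthNat R (R ⧸ I ^ (n + ℓ)) : ℝ) / (n : ℝ) ^ d)
          atTop (nhds L) := by
        have h1 : Tendsto (fun n : ℕ =>
            (lengthNat R (R ⧸ I ^ (n + ℓ)) : ℝ) / ((n : ℝ) + ℓ) ^ d) atTop (nhds L) := by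
          have := hfI.comp (tendsto_add_atTop_nat ℓ)
          simpa [Function.comp_def] using this
        have h2 := h1.mul hr1
        rw [mul_one] at h2
        apply h2.congr'
        filter_upwards [eventually_ge_atTop 1] with n hn
        have hn0 : (n : ℝ) ≠ 0 := by positivity
        have hnl : ((n : ℝ) + ℓ) ≠ 0 := by positivity
        rw [div_pow]
        field_simp
      refine tendsto_of_tendsto_of_tendsto_of_le_of_le' hfI hup ?_ ?_
      · filter_upwards [eventually_ge_atTop ℓ] with n hn
        have := hlen3 n hn
        gcongr
      · filter_upwards with n
        have := hlen1 n
        gcongr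
    · -- from J to I
      intro hfJ
      rw [← tendsto_add_atTop_iff_nat ℓ]
      have hlow : Tendsto (fun n : ℕ => (lengthNat R (R ⧸ J ^ n) : ℝ) / ((n : ℝ) + ℓ) ^ d)
          atTop (nhds L) := by
        have h2 := hfJ.mul hr2
        rw [mul_one] at h2
        apply h2.congr'
        filter_upwards [eventually_ge_atTop 1] with n hn
        have hn0 : (n : ℝ) ≠ 0 := by positivity
        have hnl : ((n : ℝ) + ℓ) ≠ 0 := by positivity
        rw [div_pow]
        field_simp
      have hup : Tendsto (fun n : ℕ =>
          (lengthNat R (R ⧸ J ^ (n + ℓ)) : ℝ) / ((n : ℝ) + ℓ) ^ d) atTop (nhds L) := by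
        have := hfJ.comp (tendsto_add_atTop_nat ℓ)
        simpa [Function.comp_def] using this
      have hmid : Tendsto (fun n : ℕ =>
          (lengthNat R (R ⧸ I ^ (n + ℓ)) : ℝ) / ((n : ℝ) + ℓ) ^ d) atTop (nhds L) := by
        refine tendsto_of_tendsto_of_tendsto_of_le_of_le' hlow hup ?_ ?_
        · filter_upwards with n
          have := hlen1 n
          gcongr
        · filter_upwards with n
          have := hlen2 n
          gcongr
      exact hmid.congr fun n => by push_cast; ring
end

section
/- Let R = k[[X,Y,Z]]/(XY, YZ, ZX) with k = Z/2Z, and let x, y, z be the images of X, Y, Z. Set I = (x+y, y+z) and f = x+y+z. Then (f) is an almost reduction of I (indeed f·I² = I³ and f² ∈ I²), but I admits no principal ideal reduction, i.e., there is no a ∈ R with a·I^n = I^{n+1} for some n. -/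
set_option maxHeartbeats 1000000

noncomputable section

/-- The formal power series ring `k[[X,Y,Z]]` over `k = ℤ/2ℤ`. -/
abbrev S : Type := MvPowerSeries (Fin 3) (ZMod 2)

/-- The ideal `(XY, YZ, ZX)` of `k[[X,Y,Z]]`. -/
def 𝔞 : Ideal S :=
  Ideal.span {MvPowerSeries.X 0 * MvPowerSeries.X 1, MvPowerSeries.X 1 * MvPowerSeries.X 2,
    MvPowerSeries.X 2 * MvPowerSeries.X 0}

/-- `R = k[[X,Y,Z]]/(XY, YZ, ZX)`. -/
abbrev R : Type := S ⧸ 𝔞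

/-- The image `x` of `X` in `R`. -/
def x : R := Ideal.Quotient.mk 𝔞 (MvPowerSeries.X 0)
/-- The image `y` of `Y` in `R`. -/
def y : R := Ideal.Quotient.mk 𝔞 (MvPowerSeries.X 1)
/-- The image `z` of `Z` in `R`. -/
def z : R := Ideal.Quotient.mk 𝔞 (MvPowerSeries.X 2)

namespace AlmostRed

/-- Substitution `X i ↦ t`, other variables `↦ 0`. -/
def proj (i : Fin 3) : S →+* PowerSeries (ZMod 2) where
  toFun F := PowerSeries.mk fun n => MvPowerSeries.coeff (Finsupp.single i n) F
  map_zero' := by ext n; simp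
  map_one' := by
    ext n
    simp [MvPowerSeries.coeff_one, PowerSeries.coeff_one, Finsupp.single_eq_zero]
  map_add' F G := by ext n; simp
  map_mul' F G := by
    ext n
    have hrec : ∀ p ∈ Finset.HasAntidiagonal.antidiagonal (Finsupp.single i n),
        p.1 = Finsupp.single i (p.1 i) ∧ p.2 = Finsupp.single i (p.2 i) := by
      intro p hp
      rw [Finset.HasAntidiagonal.mem_antidiagonal] at hp
      have h1 : ∀ j, j ≠ i → p.1 j = 0 ∧ p.2 j = 0 := by
        intro j hj
        have := congrArg (fun g : Fin 3 →₀ ℕ => g j) hp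
        simp [Finsupp.single_apply, (Ne.symm hj)] at this
        omega
      constructor <;> ext j <;> simp only [Finsupp.single_apply] <;> by_cases h : i = j
      · subst h; simp
      · simp [h, (h1 j (Ne.symm h)).1]
      · subst h; simp
      · simp [h, (h1 j (Ne.symm h)).2]
    simp only [PowerSeries.coeff_mk, PowerSeries.coeff_mul, MvPowerSeries.coeff_mul]
    refine Finset.sum_nbij' (fun p => (p.1 i, p.2 i))
      (fun q => (Finsupp.single i q.1, Finsupp.single i q.2)) ?_ ?_ ?_ ?_ ?_
    · intro p hp
      rw [Finset.HasAntidiagonal.mem_antidiagonal] at hp ⊢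
      have := congrArg (fun g : Fin 3 →₀ ℕ => g i) hp
      simpa using this
    · intro q hq
      rw [Finset.HasAntidiagonal.mem_antidiagonal] at hq ⊢
      rw [← Finsupp.single_add, hq]
    · intro p hp
      obtain ⟨h1, h2⟩ := hrec p hp
      exact Prod.ext h1.symm h2.symm
    · intro q hq; simp
    · intro p hp
      obtain ⟨h1, h2⟩ := hrec p hp
      rw [← h1, ← h2]

@[simp] lemma proj_X_self (i : Fin 3) : proj i (MvPowerSeries.X i) = PowerSeries.X := by
  ext n
  simp only [proj, RingHom.coe_mk, MonoidHom.coe_mk, OneHom.coe_mk, PowerSeries.coeff_mk,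
    MvPowerSeries.coeff_X, PowerSeries.coeff_X]
  by_cases h : n = 1 <;> simp [h, Finsupp.single_eq_single_iff]

lemma proj_X_ne (i j : Fin 3) (h : j ≠ i) : proj i (MvPowerSeries.X j) = 0 := by
  ext n
  have hne : (Finsupp.single i n) ≠ Finsupp.single j 1 := by
    intro hc
    rcases (Finsupp.single_eq_single_iff _ _ _ _).mp hc with ⟨hij, _⟩ | ⟨_, h1⟩
    · exact h hij.symm
    · exact absurd h1 one_ne_zero
  simp [proj, MvPowerSeries.coeff_X, hne]

lemma constantCoeff_proj (i : Fin 3) (F : S) :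
    PowerSeries.constantCoeff (proj i F) = MvPowerSeries.constantCoeff F := by
  rw [show PowerSeries.constantCoeff ((proj i) F)
      = PowerSeries.coeff 0 ((proj i) F) from
    (PowerSeries.coeff_zero_eq_constantCoeff_apply _).symm]
  simp only [proj, RingHom.coe_mk, MonoidHom.coe_mk, OneHom.coe_mk, PowerSeries.coeff_mk,
    Finsupp.single_zero]
  exact MvPowerSeries.coeff_zero_eq_constantCoeff_apply F

lemma proj_gen (i a b : Fin 3) (hab : a ≠ b) :
    proj i (MvPowerSeries.X a * MvPowerSeries.X b) = 0 := by
  rw [map_mul]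
  rcases eq_or_ne a i with rfl | ha
  · rw [proj_X_ne a b (Ne.symm hab), mul_zero]
  · rw [proj_X_ne i a ha, zero_mul]

lemma proj_ker (i : Fin 3) : ∀ s ∈ 𝔞, proj i s = 0 := by
  have : 𝔞 ≤ RingHom.ker (proj i) := by
    rw [𝔞, Ideal.span_le]
    rintro s (rfl | rfl | rfl) <;>
      simp only [SetLike.mem_coe, RingHom.mem_ker] <;>
      exact proj_gen i _ _ (by decide)
  exact fun s hs => this hs

/-- The induced map `R →+* (ℤ/2)[[t]]` sending `x_i ↦ t` and the other variables to `0`. -/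
def Pq (i : Fin 3) : R →+* PowerSeries (ZMod 2) :=
  Ideal.Quotient.lift 𝔞 (proj i) (proj_ker i)

/-- The "constant term" map `R →+* ℤ/2`. -/
def E : R →+* ZMod 2 :=
  Ideal.Quotient.lift 𝔞 (MvPowerSeries.constantCoeff : S →+* ZMod 2) (by
    have : 𝔞 ≤ RingHom.ker (MvPowerSeries.constantCoeff : S →+* ZMod 2) := by
      rw [𝔞, Ideal.span_le]
      rintro s (rfl | rfl | rfl) <;>
        simp [RingHom.mem_ker, MvPowerSeries.constantCoeff_X]
    exact fun s hs => RingHom.mem_ker.mp (this hs))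

lemma constE (i : Fin 3) (r : R) : PowerSeries.constantCoeff (Pq i r) = E r := by
  obtain ⟨A, rfl⟩ := Ideal.Quotient.mk_surjective r
  rw [Pq, E, Ideal.Quotient.lift_mk, Ideal.Quotient.lift_mk]
  exact constantCoeff_proj i A

lemma Pq_x (i : Fin 3) : Pq i x = if i = 0 then PowerSeries.X else 0 := by
  rw [x, Pq, Ideal.Quotient.lift_mk]
  rcases eq_or_ne i 0 with rfl | h
  · simp
  · rw [if_neg h]; exact proj_X_ne i 0 (Ne.symm h)

lemma Pq_y (i : Fin 3) : Pq i y = if i = 1 then PowerSeries.X else 0 := by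
  rw [y, Pq, Ideal.Quotient.lift_mk]
  rcases eq_or_ne i 1 with rfl | h
  · simp
  · rw [if_neg h]; exact proj_X_ne i 1 (Ne.symm h)

lemma Pq_z (i : Fin 3) : Pq i z = if i = 2 then PowerSeries.X else 0 := by
  rw [z, Pq, Ideal.Quotient.lift_mk]
  rcases eq_or_ne i 2 with rfl | h
  · simp
  · rw [if_neg h]; exact proj_X_ne i 2 (Ne.symm h)

lemma hxy : x * y = 0 := by
  rw [x, y, ← map_mul, Ideal.Quotient.eq_zero_iff_mem]
  exact Ideal.subset_span (by simp)

lemma hyz : y * z = 0 := by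
  rw [y, z, ← map_mul, Ideal.Quotient.eq_zero_iff_mem]
  exact Ideal.subset_span (by simp)

lemma hzx : z * x = 0 := by
  rw [z, x, ← map_mul, Ideal.Quotient.eq_zero_iff_mem]
  exact Ideal.subset_span (by simp)

lemma h2 : (2 : R) = 0 := by
  have hS : (2 : S) = 0 := by
    have h1 : (2 : S) = (MvPowerSeries.C 2 : S) := (map_ofNat _ 2).symm
    rw [h1, show (2 : ZMod 2) = 0 from rfl, map_zero]
  calc (2 : R) = Ideal.Quotient.mk 𝔞 (2 : S) := (map_ofNat _ 2).symm
  _ = 0 := by rw [hS, map_zero]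

end AlmostRed

open AlmostRed
/-- With `I = (x+y, y+z)` and `f = x+y+z`, the ideal `(f)` is an almost reduction of `I`
(indeed `f·I² = I³` and `f² ∈ I²`), but `I` admits no principal reduction, i.e. there is
no `a ∈ I` with `I^(n+1) = a·I^n` for some `n`. -/
theorem example_almost_reduction_without_reduction :
    letI I : Ideal R := Ideal.span {x + y, y + z}
    letI f : R := x + y + z
    IsAlmostReduction (Ideal.span {f}) I ∧
      Ideal.span {f} * I ^ 2 = I ^ 3 ∧ f ^ 2 ∈ I ^ 2 ∧
      ¬ ∃ a ∈ I, ∃ n : ℕ, I ^ (n + 1) = Ideal.span {a} * I ^ n := by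
  set II : Ideal R := Ideal.span {x + y, y + z} with hII
  set f : R := x + y + z with hf
  show IsAlmostReduction (Ideal.span {f}) II ∧
      Ideal.span {f} * II ^ 2 = II ^ 3 ∧ f ^ 2 ∈ II ^ 2 ∧
      ¬ ∃ a ∈ II, ∃ n : ℕ, II ^ (n + 1) = Ideal.span {a} * II ^ n
  have hxy := AlmostRed.hxy
  have hyz := AlmostRed.hyz
  have hzx := AlmostRed.hzx
  have h2 := AlmostRed.h2
  have hu : x + y ∈ II := Ideal.subset_span (Set.mem_insert _ _)
  have hv : y + z ∈ II := Ideal.subset_span (Set.mem_insert_of_mem _ rfl)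
  have h2uu : (x + y) * (x + y) ∈ II ^ 2 := by rw [pow_two]; exact Ideal.mul_mem_mul hu hu
  have h2uv : (x + y) * (y + z) ∈ II ^ 2 := by rw [pow_two]; exact Ideal.mul_mem_mul hu hv
  have h2vv : (y + z) * (y + z) ∈ II ^ 2 := by rw [pow_two]; exact Ideal.mul_mem_mul hv hv
  have h3uuu : (x + y) * (x + y) * (x + y) ∈ II ^ 3 := by
    rw [pow_succ, pow_two]; exact Ideal.mul_mem_mul (Ideal.mul_mem_mul hu hu) hu
  have h3uuv : (x + y) * (x + y) * (y + z) ∈ II ^ 3 := by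
    rw [pow_succ, pow_two]; exact Ideal.mul_mem_mul (Ideal.mul_mem_mul hu hu) hv
  have h3vvv : (y + z) * (y + z) * (y + z) ∈ II ^ 3 := by
    rw [pow_succ, pow_two]; exact Ideal.mul_mem_mul (Ideal.mul_mem_mul hv hv) hv
  -- f * s ∈ II^3 for s ∈ II * II
  have key3 : ∀ s ∈ II * II, f * s ∈ II ^ 3 := by
    intro s hs
    refine Submodule.mul_induction_on hs (fun p hp q hq => ?_)
      (fun s t hst htt => by rw [mul_add]; exact add_mem hst htt)
    obtain ⟨a1, a2, rfl⟩ := Ideal.mem_span_pair.mp hp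
    obtain ⟨b1, b2, rfl⟩ := Ideal.mem_span_pair.mp hq
    have hexp : f * ((a1 * (x + y) + a2 * (y + z)) * (b1 * (x + y) + b2 * (y + z)))
        = (a1 * b1) * ((x + y) * (x + y) * (x + y))
          + (a1 * b2 + a2 * b1) * ((x + y) * (x + y) * (y + z))
          + (a2 * b2) * ((y + z) * (y + z) * (y + z)) := by
      rw [hf]
      linear_combination (a2 * b2 * y) * hxy
        + (a1 * b1 * (2 * x + y) + (a1 * b2 + a2 * b1) * (x + y + z)) * hyz
        + (a1 * b1 * x + (a1 * b2 + a2 * b1) * z + a2 * b2 * (2 * y + z)) * hzx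
    rw [hexp]
    exact add_mem (add_mem (Ideal.mul_mem_left _ _ h3uuu) (Ideal.mul_mem_left _ _ h3uuv))
      (Ideal.mul_mem_left _ _ h3vvv)
  -- r * s ∈ span{f} * II^2 for r ∈ II*II, s ∈ II
  have key3' : ∀ r ∈ II * II, ∀ s ∈ II, r * s ∈ Ideal.span {f} * II ^ 2 := by
    intro r hr
    refine Submodule.mul_induction_on hr (fun p hp q hq => ?_)
      (fun r t hrt htt s hs => by rw [add_mul]; exact add_mem (hrt s hs) (htt s hs))
    intro s hs
    obtain ⟨a1, a2, rfl⟩ := Ideal.mem_span_pair.mp hp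
    obtain ⟨b1, b2, rfl⟩ := Ideal.mem_span_pair.mp hq
    obtain ⟨c1, c2, rfl⟩ := Ideal.mem_span_pair.mp hs
    have hexp : (a1 * (x + y) + a2 * (y + z)) * (b1 * (x + y) + b2 * (y + z))
          * (c1 * (x + y) + c2 * (y + z))
        = (a1 * b1 * c1) * (f * ((x + y) * (x + y)))
          + (a1 * b1 * c2 + a1 * b2 * c1 + a2 * b1 * c1
              + (a1 * b2 * c2 + a2 * b1 * c2 + a2 * b2 * c1)) * (f * ((x + y) * (y + z)))
          + (a2 * b2 * c2) * (f * ((y + z) * (y + z))) := by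
      rw [hf]
      linear_combination
        (-((a1 * b2 * c2 + a2 * b1 * c2 + a2 * b2 * c1) * (x + y) + (a2 * b2 * c2) * y)) * hxy
        + (-((a1 * b1 * c1) * (2 * x + y)
            + (a1 * b1 * c2 + a1 * b2 * c1 + a2 * b1 * c1) * (x + y + z)
            + (a1 * b2 * c2 + a2 * b1 * c2 + a2 * b2 * c1) * x)) * hyz
        + (-((a1 * b1 * c1) * x + (a1 * b1 * c2 + a1 * b2 * c1 + a2 * b1 * c1) * z
            + (a1 * b2 * c2 + a2 * b1 * c2 + a2 * b2 * c1) * x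
            + (a2 * b2 * c2) * (2 * y + z))) * hzx
    rw [hexp]
    have hfm : f ∈ Ideal.span {f} := Ideal.mem_span_singleton_self f
    exact add_mem (add_mem (Ideal.mul_mem_left _ _ (Ideal.mul_mem_mul hfm h2uu))
        (Ideal.mul_mem_left _ _ (Ideal.mul_mem_mul hfm h2uv)))
      (Ideal.mul_mem_left _ _ (Ideal.mul_mem_mul hfm h2vv))
  have hmul : Ideal.span {f} * II ^ 2 = II ^ 3 := by
    apply le_antisymm
    · refine Ideal.mul_le.mpr fun r hr s hs => ?_
      obtain ⟨c, rfl⟩ := Ideal.mem_span_singleton'.mp hr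
      rw [mul_assoc]
      exact Ideal.mul_mem_left _ _ (key3 s (by rwa [pow_two] at hs))
    · have h3 : II ^ 3 = II * II * II := by rw [pow_succ, pow_two]
      rw [h3]
      exact Ideal.mul_le.mpr fun r hr s hs => key3' r hr s hs
  have hf2 : f ^ 2 ∈ II ^ 2 := by
    have hexp : f ^ 2 = (x + y) * (x + y) + ((x + y) * (y + z) + (y + z) * (y + z)) := by
      rw [hf]
      linear_combination (-1 : R) * hxy - hyz + hzx - y * y * h2
    rw [hexp]
    exact add_mem h2uu (add_mem h2uv h2vv)
  refine ⟨⟨2, ?_, ?_⟩, hmul, hf2, ?_⟩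
  · rw [Ideal.span_singleton_pow]
    exact Ideal.span_le.mpr (Set.singleton_subset_iff.mpr hf2)
  · exact hmul.symm
  -- no principal reduction
  rintro ⟨a, ha, n, hn⟩
  obtain ⟨α, β, hab⟩ := Ideal.mem_span_pair.mp ha
  -- general divisibility step
  have step : ∀ i : Fin 3, ∀ g : R,
      Ideal.map (Pq i) II = Ideal.span {PowerSeries.X} →
      Pq i a = Pq i g * PowerSeries.X → E g = 1 := by
    intro i g hI hg
    have h1 : Ideal.map (Pq i) (II ^ (n + 1)) = Ideal.map (Pq i) (Ideal.span {a} * II ^ n) := by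
      rw [hn]
    rw [Ideal.map_pow, Ideal.map_mul, Ideal.map_pow, hI, Ideal.map_span, Set.image_singleton,
      Ideal.span_singleton_pow, Ideal.span_singleton_pow, Ideal.span_singleton_mul_span_singleton,
      hg] at h1
    have h2' : (PowerSeries.X : PowerSeries (ZMod 2)) ^ (n + 1)
        ∈ Ideal.span {Pq i g * PowerSeries.X * PowerSeries.X ^ n} := by
      rw [← h1]; exact Ideal.mem_span_singleton_self _
    obtain ⟨c, hc⟩ := Ideal.mem_span_singleton'.mp h2'
    have hX : (PowerSeries.X : PowerSeries (ZMod 2)) ^ (n + 1) ≠ 0 :=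
      pow_ne_zero _ PowerSeries.X_ne_zero
    have hcg : c * Pq i g = 1 := by
      refine mul_right_cancel₀ hX ?_
      rw [one_mul]
      conv_rhs => rw [← hc]
      ring
    have := congrArg (PowerSeries.constantCoeff : PowerSeries (ZMod 2) →+* ZMod 2) hcg
    rw [map_mul, map_one, constE] at this
    revert this
    generalize PowerSeries.constantCoeff c = c0
    generalize E g = g0
    revert c0 g0; decide
  -- the three projections
  have hmapI : ∀ i : Fin 3, Ideal.map (Pq i) II = Ideal.span {PowerSeries.X} := by
    have key : ∀ i : Fin 3, Ideal.span {Pq i (x + y), Pq i (y + z)}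
        = Ideal.span {PowerSeries.X} → Ideal.map (Pq i) II = Ideal.span {PowerSeries.X} := by
      intro i h
      rw [hII, Ideal.map_span, Set.image_pair, h]
    intro i
    fin_cases i
    · refine key 0 ?_
      simp only [map_add, Pq_x, Pq_y, Pq_z, eq_self_iff_true, if_true, if_neg (by decide : ¬(0:Fin 3) = 1),
        if_neg (by decide : ¬(0:Fin 3) = 2), add_zero, zero_add]
      rw [show ({PowerSeries.X, (0 : PowerSeries (ZMod 2))} : Set _)
        = insert PowerSeries.X {0} from rfl, Ideal.span_insert]
      rw [show Ideal.span ({0} : Set (PowerSeries (ZMod 2))) = ⊥ by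
        simp [Ideal.span_singleton_eq_bot]]
      exact sup_bot_eq _
    · refine key 1 ?_
      simp only [map_add, Pq_x, Pq_y, Pq_z, eq_self_iff_true, if_true, if_neg (by decide : ¬(1:Fin 3) = 0),
        if_neg (by decide : ¬(1:Fin 3) = 2), add_zero, zero_add]
      rw [Set.pair_eq_singleton]
    · refine key 2 ?_
      simp only [map_add, Pq_x, Pq_y, Pq_z, eq_self_iff_true, if_true, if_neg (by decide : ¬(2:Fin 3) = 0),
        if_neg (by decide : ¬(2:Fin 3) = 1), add_zero, zero_add]
      rw [show ({(0 : PowerSeries (ZMod 2)), PowerSeries.X} : Set _)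
        = insert 0 {PowerSeries.X} from rfl, Ideal.span_insert]
      rw [show Ideal.span ({0} : Set (PowerSeries (ZMod 2))) = ⊥ by
        simp [Ideal.span_singleton_eq_bot]]
      exact bot_sup_eq _
  have hEα : E α = 1 := by
    refine step 0 α (hmapI 0) ?_
    rw [← hab, map_add, map_mul, map_mul, map_add, map_add, Pq_x, Pq_y, Pq_z]
    simp
  have hEβ : E β = 1 := by
    refine step 2 β (hmapI 2) ?_
    rw [← hab, map_add, map_mul, map_mul, map_add, map_add, Pq_x, Pq_y, Pq_z]
    simp
  have hEαβ : E (α + β) = 1 := by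
    refine step 1 (α + β) (hmapI 1) ?_
    rw [← hab, map_add, map_mul, map_mul, map_add, map_add, map_add, Pq_x, Pq_y, Pq_z]
    simp
    ring
  rw [map_add, hEα, hEβ] at hEαβ
  exact absurd hEαβ (by decide)
end
end
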